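/- arXiv:1312.2363 — 6 statements merged into one kernel-verified Lean document; each statement's English description precedes it below -/
import Mathlib

section
/- Nonnegativity of the generalized Rényi divergence for all admissible orders: for every real α with α ≠ 0 and α ≠ 1 (including negative α), R_α(p ‖ q) ≥ 0. -/
open Finset Real

lemma key_holder (m : ℕ) (x y : Fin m → ℝ) (hx : ∀ j, 0 < x j) (hy : ∀ j, 0 < y j)
    {s : ℝ} (hs0 : 0 < s) (hs1 : s < 1) :
    ∑ j, x j ^ s * y j ^ (1 - s) ≤ (∑ j, x j) ^ s * (∑ j, y j) ^ (1 - s) := by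
  have hp1 : (1 : ℝ) ≤ 1 / s := by rw [le_div_iff₀ hs0]; linarith
  have h := Real.inner_le_weight_mul_Lp_of_nonneg Finset.univ hp1 y
    (fun j => (x j / y j) ^ s) (fun j => (hy j).le)
    (fun j => (rpow_nonneg (div_nonneg (hx j).le (hy j).le) s))
  simp only [one_div, inv_inv] at h
  calc ∑ j, x j ^ s * y j ^ (1 - s)
      = ∑ j, y j * (x j / y j) ^ s := by
        refine Finset.sum_congr rfl fun j _ => ?_
        rw [div_rpow (hx j).le (hy j).le, rpow_sub (hy j), rpow_one]
        field_simp
    _ ≤ (∑ j, y j) ^ (1 - s⁻¹⁻¹) * (∑ j, y j * ((x j / y j) ^ s) ^ s⁻¹) ^ s := by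
        simpa using h
    _ = (∑ j, x j) ^ s * (∑ j, y j) ^ (1 - s) := by
        rw [inv_inv, mul_comm]
        congr 2
        refine Finset.sum_congr rfl fun j _ => ?_
        rw [← rpow_mul (div_nonneg (hx j).le (hy j).le), mul_inv_cancel₀ hs0.ne',
          rpow_one, mul_div_cancel₀ _ (hy j).ne']

lemma key_holder_rev (m : ℕ) (hm : 1 ≤ m) (x y : Fin m → ℝ)
    (hx : ∀ j, 0 < x j) (hy : ∀ j, 0 < y j) {β : ℝ} (hβ : 1 < β) :
    (∑ j, x j) ^ β * (∑ j, y j) ^ (1 - β) ≤ ∑ j, x j ^ β * y j ^ (1 - β) := by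
  have hne : (Finset.univ : Finset (Fin m)).Nonempty := ⟨⟨0, hm⟩, Finset.mem_univ _⟩
  have hβ0 : (0:ℝ) < β := by linarith
  have hs0 : (0:ℝ) < β⁻¹ := by positivity
  have hs1 : β⁻¹ < 1 := by rw [inv_lt_one_iff₀]; right; exact hβ
  set X : Fin m → ℝ := fun j => x j ^ β * y j ^ (1 - β) with hX
  have hXpos : ∀ j, 0 < X j := fun j => by
    have := hx j; have := hy j; positivity
  have hSX : 0 < ∑ j, X j := Finset.sum_pos (fun j _ => hXpos j) hne
  have hSy : 0 < ∑ j, y j := Finset.sum_pos (fun j _ => hy j) hne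
  have hSx : 0 < ∑ j, x j := Finset.sum_pos (fun j _ => hx j) hne
  have h := key_holder m X y hXpos hy hs0 hs1
  have hterm : ∀ j, X j ^ β⁻¹ * y j ^ (1 - β⁻¹) = x j := by
    intro j
    rw [hX]
    rw [mul_rpow (rpow_nonneg (hx j).le _) (rpow_nonneg (hy j).le _),
      ← rpow_mul (hx j).le, ← rpow_mul (hy j).le, mul_inv_cancel₀ hβ0.ne',
      rpow_one, mul_assoc, ← rpow_add (hy j)]
    have : (1 - β) * β⁻¹ + (1 - β⁻¹) = 0 := by field_simp; ring
    rw [this, rpow_zero, mul_one]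
  rw [Finset.sum_congr rfl (fun j _ => hterm j)] at h
  -- h : ∑ x ≤ (∑ X)^β⁻¹ * (∑ y)^(1-β⁻¹)
  have h2 : (∑ j, x j) ^ β ≤ (∑ j, X j) * (∑ j, y j) ^ (β - 1) := by
    calc (∑ j, x j) ^ β ≤ ((∑ j, X j) ^ β⁻¹ * (∑ j, y j) ^ (1 - β⁻¹)) ^ β :=
          rpow_le_rpow hSx.le h hβ0.le
      _ = (∑ j, X j) * (∑ j, y j) ^ (β - 1) := by
          rw [mul_rpow (rpow_nonneg hSX.le _) (rpow_nonneg hSy.le _),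
            ← rpow_mul hSX.le, ← rpow_mul hSy.le, inv_mul_cancel₀ hβ0.ne', rpow_one]
          congr 1
          field_simp
  calc (∑ j, x j) ^ β * (∑ j, y j) ^ (1 - β)
      ≤ (∑ j, X j) * (∑ j, y j) ^ (β - 1) * (∑ j, y j) ^ (1 - β) :=
        mul_le_mul_of_nonneg_right h2 (rpow_nonneg hSy.le _)
    _ = ∑ j, X j := by
        rw [mul_assoc, ← rpow_add hSy]
        norm_num

/-- Generalized Rényi (alpha-gamma) divergence of order `α` between two
positive mass functions `p q : Fin m → ℝ`, with `r j = q j / p j`. -/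
noncomputable def renyiDiv (m : ℕ) (α : ℝ) (p q : Fin m → ℝ) : ℝ :=
  (1 / (α * (1 - α))) *
    Real.log (((∑ j, p j) ^ α * (∑ j, p j * (q j / p j)) ^ (1 - α)) /
      ∑ j, p j * (q j / p j) ^ (1 - α))

/-- Nonnegativity of the generalized Rényi divergence for all admissible orders:
for every real `α` with `α ≠ 0` and `α ≠ 1` (including negative `α`),
`R_α(p‖q) ≥ 0`. -/
theorem renyiDiv_nonneg (m : ℕ) (hm : 1 ≤ m) (p q : Fin m → ℝ)
    (hp : ∀ j, 0 < p j) (hq : ∀ j, 0 < q j)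
    (α : ℝ) (hα0 : α ≠ 0) (hα1 : α ≠ 1) :
    0 ≤ renyiDiv m α p q := by
  unfold renyiDiv
  have hne : (Finset.univ : Finset (Fin m)).Nonempty := ⟨⟨0, hm⟩, Finset.mem_univ _⟩
  have hQeq : (∑ j, p j * (q j / p j)) = ∑ j, q j :=
    Finset.sum_congr rfl fun j _ => by
      rw [mul_comm, div_mul_cancel₀ _ (hp j).ne']
  have hSeq : (∑ j, p j * (q j / p j) ^ (1 - α)) = ∑ j, p j ^ α * q j ^ (1 - α) :=
    Finset.sum_congr rfl fun j _ => by
      rw [div_rpow (hq j).le (hp j).le, mul_div_assoc',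
        div_eq_iff (rpow_pos_of_pos (hp j) _).ne', mul_comm (p j ^ α), mul_assoc,
        ← rpow_add (hp j)]
      have hexp : α + (1 - α) = 1 := by ring
      rw [hexp, rpow_one, mul_comm]
  rw [hQeq, hSeq]
  set P := ∑ j, p j with hPdef
  set Q := ∑ j, q j with hQdef
  set S := ∑ j, p j ^ α * q j ^ (1 - α) with hSdef
  have hP : 0 < P := Finset.sum_pos (fun j _ => hp j) hne
  have hQ : 0 < Q := Finset.sum_pos (fun j _ => hq j) hne
  have hS : 0 < S := Finset.sum_pos (fun j _ => by have := hp j; have := hq j; positivity) hne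
  rcases lt_trichotomy α 0 with hneg | h0 | hpos
  · -- α < 0 : reverse Hölder with β = 1 - α > 1
    have h := key_holder_rev m hm q p hq hp (β := 1 - α) (by linarith)
    have hle : P ^ α * Q ^ (1 - α) ≤ S := by
      have : (1 : ℝ) - (1 - α) = α := by ring
      rw [this] at h
      calc P ^ α * Q ^ (1 - α) = Q ^ (1 - α) * P ^ α := mul_comm _ _
        _ ≤ ∑ j, q j ^ (1 - α) * p j ^ α := h
        _ = S := Finset.sum_congr rfl fun j _ => mul_comm _ _
    have hc : 1 / (α * (1 - α)) < 0 := by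
      apply div_neg_of_pos_of_neg one_pos
      apply mul_neg_of_neg_of_pos hneg
      linarith
    have hlog : Real.log (P ^ α * Q ^ (1 - α) / S) ≤ 0 := by
      apply Real.log_nonpos
      · positivity
      · rw [div_le_one hS]; exact hle
    have := mul_nonneg (neg_nonneg.2 hc.le) (neg_nonneg.2 hlog)
    rwa [neg_mul_neg] at this
  · exact absurd h0 hα0
  · rcases lt_trichotomy α 1 with hlt | h1 | hgt
    · -- 0 < α < 1 : direct Hölder
      have h := key_holder m p q hp hq hpos hlt
      have hc : 0 < 1 / (α * (1 - α)) := by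
        apply div_pos one_pos
        apply mul_pos hpos
        linarith
      refine mul_nonneg hc.le ?_
      apply Real.log_nonneg
      rw [le_div_iff₀ hS, one_mul]
      exact h
    · exact absurd h1 hα1
    · -- α > 1 : reverse Hölder with β = α
      have h := key_holder_rev m hm p q hp hq (β := α) hgt
      have hc : 1 / (α * (1 - α)) < 0 := by
        apply div_neg_of_pos_of_neg one_pos
        apply mul_neg_of_pos_of_neg hpos
        linarith
      have hlog : Real.log (P ^ α * Q ^ (1 - α) / S) ≤ 0 := by
        apply Real.log_nonpos
        · positivity
        · rw [div_le_one hS]; exact h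
      have := mul_nonneg (neg_nonneg.2 hc.le) (neg_nonneg.2 hlog)
      rwa [neg_mul_neg] at this
end

section
/- Monotonicity of the rescaled Rényi divergence: if 0 < α ≤ α′ with α ≠ 1 and α′ ≠ 1, then α·R_α(p ‖ q) ≤ α′·R_{α′}(p ‖ q). Hence α is an inequality-aversion parameter for α·R_α. -/
open Real Finset

/-- Log-sum-exp is convex in the parameter. -/
lemma lse_convexOn (m : ℕ) (t c : Fin m → ℝ) :
    ConvexOn ℝ Set.univ (fun x => Real.log (∑ j, Real.exp (x * t j + c j))) := by
  refine ⟨convex_univ, ?_⟩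
  intro x _ y _ a b ha hb hab
  rcases eq_or_lt_of_le ha with rfl | ha'
  · have hb1 : b = 1 := by linarith
    simp [hb1]
  rcases eq_or_lt_of_le hb with rfl | hb'
  · have ha1 : a = 1 := by linarith
    simp [ha1]
  rcases Nat.eq_zero_or_pos m with rfl | hm
  · simp [Real.log_zero]
  have hne : (Finset.univ : Finset (Fin m)).Nonempty := ⟨⟨0, hm⟩, Finset.mem_univ _⟩
  set Sx := ∑ j, Real.exp (x * t j + c j) with hSx
  set Sy := ∑ j, Real.exp (y * t j + c j) with hSy
  have hSxpos : 0 < Sx := Finset.sum_pos (fun j _ => Real.exp_pos _) hne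
  have hSypos : 0 < Sy := Finset.sum_pos (fun j _ => Real.exp_pos _) hne
  have key : ∑ j, Real.exp ((a * x + b * y) * t j + c j) ≤ Sx ^ a * Sy ^ b := by
    have hterm : ∀ j, Real.exp ((a * x + b * y) * t j + c j)
        = Real.exp (x * t j + c j) ^ a * Real.exp (y * t j + c j) ^ b := by
      intro j
      have harg : (a * x + b * y) * t j + c j = (x * t j + c j) * a + (y * t j + c j) * b := by
        linear_combination (-(c j)) * hab
      rw [harg, Real.exp_add, Real.exp_mul, Real.exp_mul]
    calc ∑ j, Real.exp ((a * x + b * y) * t j + c j)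
        = ∑ j, (Sx ^ a * Sy ^ b) *
            ((Real.exp (x * t j + c j) / Sx) ^ a * (Real.exp (y * t j + c j) / Sy) ^ b) := by
          refine Finset.sum_congr rfl fun j _ => ?_
          rw [hterm j, Real.div_rpow (Real.exp_pos _).le hSxpos.le,
            Real.div_rpow (Real.exp_pos _).le hSypos.le]
          field_simp
      _ = (Sx ^ a * Sy ^ b) *
            ∑ j, ((Real.exp (x * t j + c j) / Sx) ^ a * (Real.exp (y * t j + c j) / Sy) ^ b) := by
          rw [Finset.mul_sum]
      _ ≤ (Sx ^ a * Sy ^ b) * 1 := by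
          refine mul_le_mul_of_nonneg_left ?_ (by positivity)
          calc ∑ j, ((Real.exp (x * t j + c j) / Sx) ^ a * (Real.exp (y * t j + c j) / Sy) ^ b)
              ≤ ∑ j, (a * (Real.exp (x * t j + c j) / Sx) + b * (Real.exp (y * t j + c j) / Sy)) := by
                refine Finset.sum_le_sum fun j _ => ?_
                exact Real.geom_mean_le_arith_mean2_weighted ha hb (by positivity) (by positivity) hab
            _ = 1 := by
                rw [Finset.sum_add_distrib, ← Finset.mul_sum, ← Finset.mul_sum,
                  ← Finset.sum_div, ← Finset.sum_div, ← hSx, ← hSy,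
                  div_self hSxpos.ne', div_self hSypos.ne']
                linarith
      _ = Sx ^ a * Sy ^ b := mul_one _
  calc Real.log (∑ j, Real.exp ((a * x + b * y) * t j + c j))
      ≤ Real.log (Sx ^ a * Sy ^ b) :=
        Real.log_le_log (Finset.sum_pos (fun j _ => Real.exp_pos _) hne) key
    _ = a * Real.log Sx + b * Real.log Sy := by
        rw [Real.log_mul (by positivity) (by positivity), Real.log_rpow hSxpos,
          Real.log_rpow hSypos]


/-- Monotonicity of the rescaled Rényi divergence: if `0 < α ≤ α'` with
`α ≠ 1` and `α' ≠ 1`, then `α·R_α(p‖q) ≤ α'·R_{α'}(p‖q)`. -/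
theorem renyiDiv_rescaled_mono (m : ℕ) (hm : 1 ≤ m) (p q : Fin m → ℝ)
    (hp : ∀ j, 0 < p j) (hq : ∀ j, 0 < q j)
    (α α' : ℝ) (hα : 0 < α) (hαα' : α ≤ α') (hα1 : α ≠ 1) (hα'1 : α' ≠ 1) :
    α * renyiDiv m α p q ≤ α' * renyiDiv m α' p q := by
  have hne : (Finset.univ : Finset (Fin m)).Nonempty := ⟨⟨0, hm⟩, Finset.mem_univ _⟩
  set P := ∑ j, p j with hPdef
  set Q := ∑ j, q j with hQdef
  have hP : 0 < P := Finset.sum_pos (fun j _ => hp j) hne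
  have hQ : 0 < Q := Finset.sum_pos (fun j _ => hq j) hne
  have hQ' : ∑ j, p j * (q j / p j) = Q := by
    rw [hQdef]
    refine Finset.sum_congr rfl fun j _ => ?_
    rw [mul_comm, div_mul_cancel₀ _ (hp j).ne']
  set t : Fin m → ℝ := fun j => Real.log (p j * Q / (q j * P)) with ht
  set c : Fin m → ℝ := fun j => Real.log (q j / Q) with hc
  have hS : ∀ x : ℝ, ∑ j, Real.exp (x * t j + c j)
      = (∑ j, p j * (q j / p j) ^ (1 - x)) * (Q ^ (x - 1) * P ^ (-x)) := by
    intro x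
    rw [Finset.sum_mul]
    refine Finset.sum_congr rfl fun j _ => ?_
    have hb : 0 < p j * Q / (q j * P) := div_pos (mul_pos (hp j) hQ) (mul_pos (hq j) hP)
    rw [ht, hc]
    simp only
    rw [Real.exp_add, mul_comm x, ← Real.rpow_def_of_pos hb, Real.exp_log (div_pos (hq j) hQ)]
    rw [Real.div_rpow (mul_pos (hp j) hQ).le (mul_pos (hq j) hP).le,
      Real.mul_rpow (hp j).le hQ.le, Real.mul_rpow (hq j).le hP.le,
      Real.div_rpow (hq j).le (hp j).le,
      Real.rpow_sub hQ, Real.rpow_one, Real.rpow_sub (hq j), Real.rpow_one,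
      Real.rpow_sub (hp j), Real.rpow_one, Real.rpow_neg hP.le]
    have h1 := Real.rpow_pos_of_pos (hp j) x
    have h2 := Real.rpow_pos_of_pos (hq j) x
    have h3 := Real.rpow_pos_of_pos hP x
    have h4 := Real.rpow_pos_of_pos hQ x
    field_simp [(hp j).ne', (hq j).ne', hP.ne', hQ.ne', h1.ne', h2.ne', h3.ne', h4.ne']
  set g : ℝ → ℝ := fun x => Real.log (∑ j, Real.exp (x * t j + c j)) with hg
  have hSpos : ∀ x : ℝ, 0 < ∑ j, p j * (q j / p j) ^ (1 - x) := fun x =>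
    Finset.sum_pos (fun j _ => mul_pos (hp j) (Real.rpow_pos_of_pos (div_pos (hq j) (hp j)) _)) hne
  have hg1 : g 1 = 0 := by
    rw [hg]
    simp only
    rw [hS 1]
    have h11 : (1:ℝ) - 1 = 0 := by norm_num
    simp only [h11, Real.rpow_zero, mul_one, one_mul, Real.rpow_neg_one, ← hPdef]
    rw [mul_inv_cancel₀ hP.ne', Real.log_one]
  have key : ∀ β : ℝ, 0 < β → β ≠ 1 → β * renyiDiv m β p q = (g β - g 1) / (β - 1) := by
    intro β hβ hβ1
    rw [hg1, sub_zero, hg]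
    simp only
    rw [hS β]
    have hlg : Real.log ((∑ j, p j * (q j / p j) ^ (1 - β)) * (Q ^ (β - 1) * P ^ (-β)))
        = Real.log (∑ j, p j * (q j / p j) ^ (1 - β)) + ((β - 1) * Real.log Q
          + (-β) * Real.log P) := by
      rw [Real.log_mul (hSpos β).ne'
          (mul_pos (Real.rpow_pos_of_pos hQ _) (Real.rpow_pos_of_pos hP _)).ne',
        Real.log_mul (Real.rpow_pos_of_pos hQ _).ne' (Real.rpow_pos_of_pos hP _).ne',
        Real.log_rpow hQ, Real.log_rpow hP]
    rw [hlg, renyiDiv, hQ', ← hPdef]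
    rw [Real.log_div
        (mul_pos (Real.rpow_pos_of_pos hP _) (Real.rpow_pos_of_pos hQ _)).ne' (hSpos β).ne',
      Real.log_mul (Real.rpow_pos_of_pos hP _).ne' (Real.rpow_pos_of_pos hQ _).ne',
      Real.log_rpow hP, Real.log_rpow hQ]
    have hβ1' : β - 1 ≠ 0 := sub_ne_zero.2 hβ1
    have h1β : 1 - β ≠ 0 := sub_ne_zero.2 (Ne.symm hβ1)
    field_simp
    ring
  have hα' : 0 < α' := lt_of_lt_of_le hα hαα'
  rw [key α hα hα1, key α' hα' hα'1]
  exact (lse_convexOn m t c).secant_mono (Set.mem_univ (1:ℝ)) (Set.mem_univ α)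
    (Set.mem_univ α') hα1 hα'1 hαα'
end

section
/- Limit of the generalized Rényi divergence as α → 1 (mean log deviation form): the limit as α tends to 1 (with α ≠ 0, 1) of R_α(p ‖ q) equals −Σ_j p̄_j · ln r̄_j, where p̄_j = p_j/Σ_k p_k, q̄_j = q_j/Σ_k q_k, and r̄_j = q̄_j/p̄_j. -/
open Real Filter

/-- Limit of the generalized Rényi divergence as `α → 1` (mean log deviation
form): as `α` tends to `1` with `α ≠ 0, 1`, `R_α(p‖q)` tends to
`−Σ_j p̄_j ln r̄_j`, where `p̄_j = p_j/Σ p`, `q̄_j = q_j/Σ q`, `r̄_j = q̄_j/p̄_j`. -/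
theorem renyiDiv_tendsto_one (m : ℕ) (hm : 1 ≤ m) (p q : Fin m → ℝ)
    (hp : ∀ j, 0 < p j) (hq : ∀ j, 0 < q j) :
    Filter.Tendsto (fun α : ℝ => renyiDiv m α p q)
      (nhdsWithin 1 {α : ℝ | α ≠ 0 ∧ α ≠ 1})
      (nhds (-(∑ j, (p j / ∑ k, p k) *
        Real.log ((q j / ∑ k, q k) / (p j / ∑ k, p k))))) := by
  have hne : (Finset.univ : Finset (Fin m)).Nonempty := ⟨⟨0, hm⟩, Finset.mem_univ _⟩
  have hPpos : 0 < ∑ k, p k := Finset.sum_pos (fun j _ => hp j) hne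
  have hQpos : 0 < ∑ k, q k := Finset.sum_pos (fun j _ => hq j) hne
  set P := ∑ k, p k with hP
  set Q := ∑ k, q k with hQ
  have hsumQ : (∑ j, p j * (q j / p j)) = Q := by
    rw [hQ]
    exact Finset.sum_congr rfl fun j _ => by
      rw [mul_div_assoc', mul_div_cancel_left₀ _ (hp j).ne']
  set S : ℝ → ℝ := fun α => ∑ j, p j * (q j / p j) ^ (1 - α) with hSdef
  have hS1 : S 1 = P := by
    simp [hSdef, hP]
  have hSpos : ∀ α : ℝ, 0 < S α := fun α =>
    Finset.sum_pos (fun j _ => mul_pos (hp j) (Real.rpow_pos_of_pos (div_pos (hq j) (hp j)) _)) hne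
  set L : ℝ := ∑ j, p j * Real.log (q j / p j) with hL
  have hSderiv : HasDerivAt S (-L) 1 := by
    have : HasDerivAt S (∑ j, -(p j * Real.log (q j / p j))) 1 := by
      apply HasDerivAt.fun_sum
      intro j _
      have hr : 0 < q j / p j := div_pos (hq j) (hp j)
      have h1 : HasDerivAt (fun α : ℝ => (1 : ℝ) - α) (-1) 1 :=
        (hasDerivAt_id (1 : ℝ)).const_sub 1
      have h2 : HasDerivAt (fun x : ℝ => (q j / p j) ^ x)
          ((q j / p j) ^ ((1 : ℝ) - 1) * Real.log (q j / p j)) (1 - 1) :=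
        (Real.hasStrictDerivAt_const_rpow hr _).hasDerivAt
      have h3 := h2.comp 1 h1
      have h4 := h3.const_mul (p j)
      refine h4.congr_deriv ?_
      simp
    convert this using 1
    rw [hL, ← Finset.sum_neg_distrib]
  set f : ℝ → ℝ := fun α => α * Real.log P + (1 - α) * Real.log Q - Real.log (S α) with hfdef
  have hf1 : f 1 = 0 := by simp [hfdef, hS1]
  set D : ℝ := Real.log P - Real.log Q + L / P with hD
  have hfderiv : HasDerivAt f D 1 := by
    have h1 : HasDerivAt (fun α : ℝ => α * Real.log P) (Real.log P) 1 := by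
      simpa using (hasDerivAt_id (1 : ℝ)).mul_const (Real.log P)
    have h2 : HasDerivAt (fun α : ℝ => (1 - α) * Real.log Q) (-Real.log Q) 1 := by
      simpa using ((hasDerivAt_id (1 : ℝ)).const_sub 1).mul_const (Real.log Q)
    have h3 : HasDerivAt (fun α : ℝ => Real.log (S α)) (-L / S 1) 1 :=
      hSderiv.log (hSpos 1).ne'
    have h4 := (h1.add h2).sub h3
    refine h4.congr_deriv ?_
    rw [hD, hS1]
    ring
  have hslope : Filter.Tendsto (slope f 1) (nhdsWithin 1 {(1 : ℝ)}ᶜ) (nhds D) :=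
    hasDerivAt_iff_tendsto_slope.mp hfderiv
  have hsub : {α : ℝ | α ≠ 0 ∧ α ≠ 1} ⊆ {(1 : ℝ)}ᶜ := fun α hα => hα.2
  have hslope' : Filter.Tendsto (slope f 1) (nhdsWithin 1 {α : ℝ | α ≠ 0 ∧ α ≠ 1}) (nhds D) :=
    hslope.mono_left (nhdsWithin_mono 1 hsub)
  have hinv : Filter.Tendsto (fun α : ℝ => α⁻¹) (nhdsWithin 1 {α : ℝ | α ≠ 0 ∧ α ≠ 1})
      (nhds 1) := by
    have : ContinuousAt (fun α : ℝ => α⁻¹) 1 := continuousAt_inv₀ one_ne_zero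
    simpa using this.continuousWithinAt.tendsto
  have hmain : Filter.Tendsto (fun α : ℝ => α⁻¹ * (-(slope f 1 α)))
      (nhdsWithin 1 {α : ℝ | α ≠ 0 ∧ α ≠ 1}) (nhds (1 * (-D))) :=
    hinv.mul hslope'.neg
  have heq : ∀ α ∈ {α : ℝ | α ≠ 0 ∧ α ≠ 1},
      renyiDiv m α p q = α⁻¹ * (-(slope f 1 α)) := by
    intro α hα
    obtain ⟨hα0, hα1⟩ := hα
    have hPa : (0 : ℝ) < P ^ α := Real.rpow_pos_of_pos hPpos α
    have hQa : (0 : ℝ) < Q ^ ((1 : ℝ) - α) := Real.rpow_pos_of_pos hQpos _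
    have hlog : Real.log ((P ^ α * Q ^ ((1:ℝ) - α)) / S α) = f α := by
      rw [Real.log_div (by positivity) (hSpos α).ne',
        Real.log_mul hPa.ne' hQa.ne', Real.log_rpow hPpos, Real.log_rpow hQpos, hfdef]
    have : renyiDiv m α p q = (1 / (α * (1 - α))) * f α := by
      rw [renyiDiv, hsumQ, ← hP,
        show (∑ j, p j * (q j / p j) ^ ((1:ℝ) - α)) = S α from rfl, hlog]
    rw [this, slope_def_field, hf1]
    have h1α : (1 : ℝ) - α ≠ 0 := sub_ne_zero.mpr (fun h => hα1 h.symm)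
    have hα1' : α - 1 ≠ 0 := sub_ne_zero.mpr hα1
    field_simp
    ring
  have hfinal := hmain.congr' (by
    filter_upwards [self_mem_nhdsWithin] with α hα
    exact (heq α hα).symm)
  have hval : 1 * (-D) = -(∑ j, (p j / P) * Real.log ((q j / Q) / (p j / P))) := by
    have hterm : ∀ j, (p j / P) * Real.log ((q j / Q) / (p j / P)) =
        (p j * Real.log (q j / p j)) / P + (p j / P) * (Real.log P - Real.log Q) := by
      intro j
      rw [Real.log_div (div_pos (hq j) hQpos).ne' (div_pos (hp j) hPpos).ne',
        Real.log_div (hq j).ne' hQpos.ne', Real.log_div (hp j).ne' hPpos.ne',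
        Real.log_div (hq j).ne' (hp j).ne']
      field_simp
      ring
    rw [Finset.sum_congr rfl (fun j _ => hterm j), Finset.sum_add_distrib,
      ← Finset.sum_div, ← Finset.sum_mul, ← Finset.sum_div, ← hL, ← hP,
      div_self hPpos.ne', hD]
    ring
  rw [← hval]
  exact hfinal
end

section
/- Limit of the generalized Rényi divergence as α → 0 (Theil index form): the limit as α tends to 0 (with α ≠ 0, 1) of R_α(p ‖ q) equals Σ_j p̄_j · r̄_j · ln r̄_j, where p̄_j = p_j/Σ_k p_k, q̄_j = q_j/Σ_k q_k, and r̄_j = q̄_j/p̄_j. -/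
/-- Limit of the generalized Rényi divergence as `α → 0` (Theil index form):
as `α` tends to `0` with `α ≠ 0, 1`, `R_α(p‖q)` tends to
`Σ_j p̄_j r̄_j ln r̄_j`, where `p̄_j = p_j/Σ p`, `q̄_j = q_j/Σ q`, `r̄_j = q̄_j/p̄_j`. -/
theorem renyiDiv_tendsto_zero (m : ℕ) (hm : 1 ≤ m) (p q : Fin m → ℝ)
    (hp : ∀ j, 0 < p j) (hq : ∀ j, 0 < q j) :
    Filter.Tendsto (fun α : ℝ => renyiDiv m α p q)
      (nhdsWithin 0 {α : ℝ | α ≠ 0 ∧ α ≠ 1})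
      (nhds (∑ j, (p j / ∑ k, p k) * ((q j / ∑ k, q k) / (p j / ∑ k, p k)) *
        Real.log ((q j / ∑ k, q k) / (p j / ∑ k, p k)))) := by
  haveI : NeZero m := ⟨by omega⟩
  have hne : (Finset.univ : Finset (Fin m)).Nonempty := Finset.univ_nonempty
  set P := ∑ k, p k with hP
  set Q := ∑ k, q k with hQ
  have hPpos : 0 < P := Finset.sum_pos (fun j _ => hp j) hne
  have hQpos : 0 < Q := Finset.sum_pos (fun j _ => hq j) hne
  set r := fun j => q j / p j with hr
  have hrpos : ∀ j, 0 < r j := fun j => div_pos (hq j) (hp j)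
  have hpr : ∀ j, p j * r j = q j := fun j => by
    rw [hr, mul_comm, div_mul_cancel₀ _ (hp j).ne']
  have hsumpr : (∑ j, p j * r j) = Q := by
    rw [hQ]; exact Finset.sum_congr rfl fun j _ => hpr j
  set S := fun α : ℝ => ∑ j, p j * r j ^ (1 - α) with hSdef
  have hSpos : ∀ α, 0 < S α := fun α =>
    Finset.sum_pos (fun j _ => mul_pos (hp j) (Real.rpow_pos_of_pos (hrpos j) _)) hne
  have hS0 : S 0 = Q := by
    simp only [hSdef, sub_zero, Real.rpow_one]
    exact hsumpr
  set D := ∑ j, q j * Real.log (r j) with hD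
  set L := Real.log P - Real.log Q + D / Q with hL
  set f := fun α : ℝ => α * Real.log P + (1 - α) * Real.log Q - Real.log (S α) with hf
  have hf0 : f 0 = 0 := by simp [hf, hS0]
  -- derivative of S at 0
  have hSderiv : HasDerivAt S (-D) 0 := by
    have h : ∀ j : Fin m, HasDerivAt (fun α : ℝ => p j * r j ^ (1 - α))
        (-(q j * Real.log (r j))) 0 := by
      intro j
      have h1 : HasDerivAt (fun α : ℝ => (1 : ℝ) - α) (-1) 0 := by
        simpa using (hasDerivAt_id (0:ℝ)).const_sub 1
      have h2 : HasDerivAt (fun x : ℝ => (r j) ^ x)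
          ((r j) ^ ((1:ℝ) - 0) * Real.log (r j)) ((1:ℝ) - 0) :=
        (Real.hasStrictDerivAt_const_rpow (hrpos j) _).hasDerivAt
      have h3 := h2.comp 0 h1
      have h4 := h3.const_mul (p j)
      refine h4.congr_deriv ?_
      rw [sub_zero, Real.rpow_one,
        show p j * (r j * Real.log (r j) * -1) = -(p j * r j * Real.log (r j)) by ring,
        hpr j]
    have := HasDerivAt.fun_sum (u := Finset.univ) (fun j _ => h j)
    refine this.congr_deriv ?_
    rw [hD, ← Finset.sum_neg_distrib]
  have hfderiv : HasDerivAt f L 0 := by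
    have h1 : HasDerivAt (fun α : ℝ => α * Real.log P) (Real.log P) 0 := by
      simpa using (hasDerivAt_id (0:ℝ)).mul_const (Real.log P)
    have h2 : HasDerivAt (fun α : ℝ => (1 - α) * Real.log Q) (-Real.log Q) 0 := by
      have : HasDerivAt (fun α : ℝ => (1 : ℝ) - α) (-1) 0 := by
        simpa using (hasDerivAt_id (0:ℝ)).const_sub 1
      simpa using this.mul_const (Real.log Q)
    have h3 : HasDerivAt (fun α : ℝ => Real.log (S α)) ((-D) / S 0) 0 :=
      hSderiv.log (hSpos 0).ne'
    have := (h1.add h2).sub h3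
    refine this.congr_deriv ?_
    rw [hL, hS0]
    ring
  -- slope tendsto
  have hslope : Filter.Tendsto (fun α : ℝ => f α / α) (nhdsWithin 0 {(0:ℝ)}ᶜ) (nhds L) := by
    have := hasDerivAt_iff_tendsto_slope.mp hfderiv
    refine this.congr' ?_
    filter_upwards [self_mem_nhdsWithin] with α hα
    simp [slope_def_field, hf0, div_eq_mul_inv, mul_comm]
  have hsub : {α : ℝ | α ≠ 0 ∧ α ≠ 1} ⊆ {(0:ℝ)}ᶜ := fun α hα => hα.1
  have hslope' : Filter.Tendsto (fun α : ℝ => f α / α)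
      (nhdsWithin 0 {α : ℝ | α ≠ 0 ∧ α ≠ 1}) (nhds L) :=
    hslope.mono_left (nhdsWithin_mono 0 hsub)
  have hinv : Filter.Tendsto (fun α : ℝ => 1 / (1 - α))
      (nhdsWithin 0 {α : ℝ | α ≠ 0 ∧ α ≠ 1}) (nhds 1) := by
    have h1 : Filter.Tendsto (fun α : ℝ => 1 - α) (nhds 0) (nhds (1 - 0)) :=
      (continuous_const.sub continuous_id).tendsto 0
    have h2 := h1.inv₀ (by norm_num)
    simp only [one_div]
    simpa using h2.mono_left nhdsWithin_le_nhds
  have hmain : Filter.Tendsto (fun α : ℝ => renyiDiv m α p q)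
      (nhdsWithin 0 {α : ℝ | α ≠ 0 ∧ α ≠ 1}) (nhds (L * 1)) := by
    refine (hslope'.mul hinv).congr' ?_
    filter_upwards [self_mem_nhdsWithin] with α hα
    obtain ⟨hα0, hα1⟩ := hα
    have hlog : Real.log ((P ^ α * (∑ j, p j * (q j / p j)) ^ (1 - α)) /
        ∑ j, p j * (q j / p j) ^ (1 - α)) = f α := by
      have hsum1 : (∑ j, p j * (q j / p j)) = Q := hsumpr
      have hsum2 : (∑ j, p j * (q j / p j) ^ (1 - α)) = S α := rfl
      rw [hsum1, hsum2, Real.log_div (by positivity) (hSpos α).ne',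
        Real.log_mul (by positivity) (by positivity),
        Real.log_rpow hPpos, Real.log_rpow hQpos, hf]
    rw [renyiDiv, hlog]
    field_simp
  have htgt : (∑ j, (p j / P) * ((q j / Q) / (p j / P)) *
      Real.log ((q j / Q) / (p j / P))) = L := by
    have hterm : ∀ j, (p j / P) * ((q j / Q) / (p j / P)) *
        Real.log ((q j / Q) / (p j / P))
        = (q j * Real.log (r j)) / Q + (q j / Q) * (Real.log P - Real.log Q) := by
      intro j
      have e1 : (q j / Q) / (p j / P) = r j * (P / Q) := by
        rw [hr]; field_simp
      have e2 : (p j / P) * ((q j / Q) / (p j / P)) = q j / Q := by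
        rw [mul_comm, div_mul_cancel₀ _ (div_pos (hp j) hPpos).ne']
      rw [e2, e1, Real.log_mul (hrpos j).ne' (by positivity),
        Real.log_div hPpos.ne' hQpos.ne']
      ring
    calc (∑ j, (p j / P) * ((q j / Q) / (p j / P)) *
        Real.log ((q j / Q) / (p j / P)))
        = ∑ j, ((q j * Real.log (r j)) / Q + (q j / Q) * (Real.log P - Real.log Q)) :=
          Finset.sum_congr rfl fun j _ => hterm j
      _ = (∑ j, q j * Real.log (r j)) / Q +
          ((∑ j, q j) / Q) * (Real.log P - Real.log Q) := by
          rw [Finset.sum_add_distrib, ← Finset.sum_div, ← Finset.sum_mul,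
            ← Finset.sum_div]
      _ = L := by
          rw [hL, hD, ← hQ, div_self hQpos.ne']
          ring
  rw [htgt]
  simpa using hmain
end

section
/- Limit of the symmetrized Rényi index (Jeffrey's divergence form): the limit as α tends to 1 (with α ≠ 0, 1) of SR_α(p, q) equals (1/2) · Σ_j p̄_j (r̄_j − 1) ln r̄_j, and the limit as α tends to 0 equals the same quantity, where p̄_j = p_j/Σ_k p_k, q̄_j = q_j/Σ_k q_k, and r̄_j = q̄_j/p̄_j. -/
/-- Symmetrized Rényi index `SR_α(p,q) = (R_α(p‖q) + R_{1−α}(p‖q))/2`. -/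
noncomputable def symRenyi (m : ℕ) (α : ℝ) (p q : Fin m → ℝ) : ℝ :=
  (renyiDiv m α p q + renyiDiv m (1 - α) p q) / 2

/-- Limit of the symmetrized Rényi index (Jeffrey's divergence form): as `α`
tends to `1` (resp. `0`) with `α ≠ 0, 1`, `SR_α(p,q)` tends to
`(1/2)·Σ_j p̄_j (r̄_j − 1) ln r̄_j`. -/
theorem symRenyi_tendsto (m : ℕ) (hm : 1 ≤ m) (p q : Fin m → ℝ)
    (hp : ∀ j, 0 < p j) (hq : ∀ j, 0 < q j) :
    Filter.Tendsto (fun α : ℝ => symRenyi m α p q)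
        (nhdsWithin 1 {α : ℝ | α ≠ 0 ∧ α ≠ 1})
        (nhds ((1 / 2) * ∑ j, (p j / ∑ k, p k) *
          (((q j / ∑ k, q k) / (p j / ∑ k, p k)) - 1) *
          Real.log ((q j / ∑ k, q k) / (p j / ∑ k, p k)))) ∧
      Filter.Tendsto (fun α : ℝ => symRenyi m α p q)
        (nhdsWithin 0 {α : ℝ | α ≠ 0 ∧ α ≠ 1})
        (nhds ((1 / 2) * ∑ j, (p j / ∑ k, p k) *
          (((q j / ∑ k, q k) / (p j / ∑ k, p k)) - 1) *
          Real.log ((q j / ∑ k, q k) / (p j / ∑ k, p k)))) := by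
  haveI : Nonempty (Fin m) := ⟨⟨0, hm⟩⟩
  classical
  set P : ℝ := ∑ k, p k with hPdef
  set Qs : ℝ := ∑ k, q k with hQdef
  have hP0 : 0 < P := Finset.sum_pos (fun j _ => hp j) Finset.univ_nonempty
  have hQ0 : 0 < Qs := Finset.sum_pos (fun j _ => hq j) Finset.univ_nonempty
  have hpq : ∀ j, p j * (q j / p j) = q j := fun j => by
    rw [mul_comm, div_mul_cancel₀ _ (hp j).ne']
  have hr : ∀ j, 0 < q j / p j := fun j => div_pos (hq j) (hp j)
  set S : ℝ → ℝ := fun a => ∑ j, p j * (q j / p j) ^ (1 - a) with hSdef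
  have hS0 : ∀ a, 0 < S a := fun a =>
    Finset.sum_pos (fun j _ => mul_pos (hp j) (Real.rpow_pos_of_pos (hr j) _))
      Finset.univ_nonempty
  have hS1 : S 1 = P := by simp [hSdef, hPdef]
  have hSz : S 0 = Qs := by simp [hSdef, hpq, hQdef]
  set D : ℝ → ℝ := fun a => ∑ j, p j * ((q j / p j) ^ (1 - a) * Real.log (q j / p j))
    with hDdef
  have hS' : ∀ a, HasDerivAt S (-(D a)) a := by
    intro a
    have : HasDerivAt S (∑ j, -(p j * ((q j / p j) ^ (1 - a) * Real.log (q j / p j)))) a := by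
      apply HasDerivAt.fun_sum
      intro j _
      have h1 : HasDerivAt (fun x : ℝ => (q j / p j) ^ x)
          ((q j / p j) ^ (1 - a) * Real.log (q j / p j)) (1 - a) :=
        (Real.hasStrictDerivAt_const_rpow (hr j) (1 - a)).hasDerivAt
      have h2 : HasDerivAt (fun x : ℝ => 1 - x) (-1) a := by
        simpa using (hasDerivAt_id a).const_sub 1
      have h3 := (h1.comp a h2).const_mul (p j)
      refine h3.congr_deriv ?_
      ring
    simpa [hDdef, Finset.sum_neg_distrib] using this
  set F : ℝ → ℝ := fun a => Real.log P + Real.log Qs - Real.log (S a) - Real.log (S (1 - a))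
    with hFdef
  have hF' : ∀ a, HasDerivAt F (D a / S a - D (1 - a) / S (1 - a)) a := by
    intro a
    have hg : HasDerivAt (fun x : ℝ => Real.log (S x)) (-(D a) / S a) a :=
      (hS' a).log (ne_of_gt (hS0 a))
    have h2 : HasDerivAt (fun x : ℝ => 1 - x) (-1) a := by
      simpa using (hasDerivAt_id a).const_sub 1
    have hg2 : HasDerivAt (fun x : ℝ => Real.log (S x)) (-(D (1 - a)) / S (1 - a)) (1 - a) :=
      (hS' (1 - a)).log (ne_of_gt (hS0 (1 - a)))
    have hh : HasDerivAt (fun x : ℝ => Real.log (S (1 - x)))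
        ((-(D (1 - a)) / S (1 - a)) * (-1)) a := hg2.comp a h2
    have h4 := ((hasDerivAt_const a (Real.log P + Real.log Qs)).sub hg).sub hh
    have heq : D a / S a - D (1 - a) / S (1 - a)
        = 0 - -(D a) / S a - -(D (1 - a)) / S (1 - a) * -1 := by ring
    rw [heq]
    exact h4
  have hF1 : F 1 = 0 := by simp [hFdef, hS1, hSz]
  have hF0 : F 0 = 0 := by simp [hFdef, hS1, hSz]
  -- symRenyi equals F α / (2 α (1-α)) for α ≠ 0,1
  have hsym : ∀ α : ℝ, α ≠ 0 → α ≠ 1 →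
      symRenyi m α p q = F α / (2 * (α * (1 - α))) := by
    intro α h0 h1
    have h1' : (1 : ℝ) - α ≠ 0 := sub_ne_zero.mpr (Ne.symm h1)
    have hQeq : (∑ j, p j * (q j / p j)) = Qs := by
      simp [hpq, hQdef]
    have hlog : ∀ β : ℝ, Real.log (P ^ β * Qs ^ (1 - β) / S β)
        = β * Real.log P + (1 - β) * Real.log Qs - Real.log (S β) := by
      intro β
      rw [Real.log_div (by positivity) (ne_of_gt (hS0 β)),
        Real.log_mul (by positivity) (by positivity),
        Real.log_rpow hP0, Real.log_rpow hQ0]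
    have e1 : renyiDiv m α p q
        = (1 / (α * (1 - α))) * (α * Real.log P + (1 - α) * Real.log Qs - Real.log (S α)) := by
      rw [renyiDiv, hQeq]
      rw [show (∑ j, p j * (q j / p j) ^ (1 - α)) = S α from rfl, ← hPdef, hlog α]
    have e2 : renyiDiv m (1 - α) p q
        = (1 / (α * (1 - α))) *
          ((1 - α) * Real.log P + α * Real.log Qs - Real.log (S (1 - α))) := by
      rw [renyiDiv, hQeq]
      rw [show (∑ j, p j * (q j / p j) ^ (1 - (1 - α))) = S (1 - α) from rfl, ← hPdef,
        hlog (1 - α)]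
      have e : (1 : ℝ) - (1 - α) = α := by ring
      rw [e]
      ring
    rw [symRenyi, e1, e2, hFdef]
    field_simp
    ring
  -- value identification
  have hD1 : D 1 = ∑ j, p j * Real.log (q j / p j) := by
    simp [hDdef]
  have hD0 : D 0 = ∑ j, q j * Real.log (q j / p j) := by
    simp only [hDdef, sub_zero, Real.rpow_one]
    refine Finset.sum_congr rfl fun j _ => ?_
    rw [← mul_assoc, hpq]
  set T : ℝ := ∑ j, (p j / P) * (((q j / Qs) / (p j / P)) - 1) *
      Real.log ((q j / Qs) / (p j / P)) with hTdef
  have hT : T = (D 0) / Qs - (D 1) / P := by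
    have hterm : ∀ j, (p j / P) * (((q j / Qs) / (p j / P)) - 1) *
        Real.log ((q j / Qs) / (p j / P))
        = (q j * Real.log (q j / p j)) / Qs - (p j * Real.log (q j / p j)) / P
          + (Real.log P - Real.log Qs) * (q j / Qs - p j / P) := by
      intro j
      have hx : (q j / Qs) / (p j / P) = (q j / p j) * (P / Qs) := by
        field_simp
      rw [hx, Real.log_mul (ne_of_gt (hr j)) (by positivity),
        Real.log_div (ne_of_gt hP0) (ne_of_gt hQ0)]
      have hpj := (hp j).ne'
      have hPne := hP0.ne'
      have hQne := hQ0.ne'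
      field_simp
    rw [hTdef]
    rw [Finset.sum_congr rfl fun j _ => hterm j]
    rw [Finset.sum_add_distrib, Finset.sum_sub_distrib, ← Finset.mul_sum,
      Finset.sum_sub_distrib]
    have h1 : (∑ j, q j / Qs) = 1 := by
      rw [← Finset.sum_div, ← hQdef, div_self hQ0.ne']
    have h2 : (∑ j, p j / P) = 1 := by
      rw [← Finset.sum_div, ← hPdef, div_self hP0.ne']
    rw [h1, h2, hD0, hD1, Finset.sum_div, Finset.sum_div]
    ring
  -- limits
  have hsub : {α : ℝ | α ≠ 0 ∧ α ≠ 1} ⊆ {(1 : ℝ)}ᶜ := fun x hx => hx.2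
  have hsub0 : {α : ℝ | α ≠ 0 ∧ α ≠ 1} ⊆ {(0 : ℝ)}ᶜ := fun x hx => hx.1
  constructor
  · have ht1 : Filter.Tendsto (slope F 1) (nhdsWithin 1 {(1:ℝ)}ᶜ)
        (nhds (D 1 / S 1 - D 0 / S 0)) := by
      have := hasDerivAt_iff_tendsto_slope.mp (hF' 1)
      simpa using this
    have ht1' := ht1.mono_left (nhdsWithin_mono 1 hsub)
    have ht2 : Filter.Tendsto (fun α : ℝ => -1 / (2 * α))
        (nhdsWithin 1 {α : ℝ | α ≠ 0 ∧ α ≠ 1}) (nhds (-1 / 2)) := by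
      have : Filter.Tendsto (fun α : ℝ => -1 / (2 * α)) (nhds 1) (nhds (-1 / (2 * 1))) := by
        apply Filter.Tendsto.div tendsto_const_nhds
        · exact (continuous_const.mul continuous_id).tendsto 1
        · norm_num
      simpa using this.mono_left nhdsWithin_le_nhds
    have hmul := ht1'.mul ht2
    have heq : ∀ᶠ α in nhdsWithin 1 {α : ℝ | α ≠ 0 ∧ α ≠ 1},
        slope F 1 α * (-1 / (2 * α)) = symRenyi m α p q := by
      filter_upwards [self_mem_nhdsWithin] with α hα
      obtain ⟨h0, h1⟩ := hα
      rw [hsym α h0 h1, slope_def_field, hF1, sub_zero]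
      have hd1 : (α - 1) * (2 * α) ≠ 0 :=
        mul_ne_zero (sub_ne_zero.mpr h1) (mul_ne_zero two_ne_zero h0)
      have hd2 : 2 * (α * (1 - α)) ≠ 0 :=
        mul_ne_zero two_ne_zero (mul_ne_zero h0 (sub_ne_zero.mpr (Ne.symm h1)))
      rw [div_mul_div_comm, div_eq_div_iff hd1 hd2]
      ring
    have := hmul.congr' heq
    convert this using 2
    rw [hT, hS1, hSz]
    ring
  · have ht1 : Filter.Tendsto (slope F 0) (nhdsWithin 0 {(0:ℝ)}ᶜ)
        (nhds (D 0 / S 0 - D 1 / S 1)) := by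
      have := hasDerivAt_iff_tendsto_slope.mp (hF' 0)
      simpa using this
    have ht1' := ht1.mono_left (nhdsWithin_mono 0 hsub0)
    have ht2 : Filter.Tendsto (fun α : ℝ => 1 / (2 * (1 - α)))
        (nhdsWithin 0 {α : ℝ | α ≠ 0 ∧ α ≠ 1}) (nhds (1 / 2)) := by
      have : Filter.Tendsto (fun α : ℝ => 1 / (2 * (1 - α))) (nhds 0)
          (nhds (1 / (2 * (1 - 0)))) := by
        apply Filter.Tendsto.div tendsto_const_nhds
        · exact (continuous_const.mul (continuous_const.sub continuous_id)).tendsto 0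
        · norm_num
      simpa using this.mono_left nhdsWithin_le_nhds
    have hmul := ht1'.mul ht2
    have heq : ∀ᶠ α in nhdsWithin 0 {α : ℝ | α ≠ 0 ∧ α ≠ 1},
        slope F 0 α * (1 / (2 * (1 - α))) = symRenyi m α p q := by
      filter_upwards [self_mem_nhdsWithin] with α hα
      obtain ⟨h0, h1⟩ := hα
      rw [hsym α h0 h1, slope_def_field, hF0, sub_zero, sub_zero]
      have hd1 : α * (2 * (1 - α)) ≠ 0 :=
        mul_ne_zero h0 (mul_ne_zero two_ne_zero (sub_ne_zero.mpr (Ne.symm h1)))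
      have hd2 : 2 * (α * (1 - α)) ≠ 0 :=
        mul_ne_zero two_ne_zero (mul_ne_zero h0 (sub_ne_zero.mpr (Ne.symm h1)))
      rw [div_mul_div_comm, div_eq_div_iff hd1 hd2]
      ring
    have := hmul.congr' heq
    convert this using 2
    rw [hT, hS1, hSz]
    ring
end

section
/- Monotonicity of the rescaled symmetrized Rényi index: if 1/2 ≤ α ≤ α′ with α ≠ 1 and α′ ≠ 1, then α·SR_α(p, q) ≤ α′·SR_{α′}(p, q). Hence α is a disparity-aversion parameter for the standardized symmetrized Rényi index on α ≥ 1/2. -/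
section Aux

open Finset

variable {m : ℕ} {p q : Fin m → ℝ}

lemma aux_sum_pos (hm : 1 ≤ m) (f : Fin m → ℝ) (hf : ∀ j, 0 < f j) :
    0 < ∑ j, f j := by
  haveI : Nonempty (Fin m) := ⟨⟨0, hm⟩⟩
  exact Finset.sum_pos (fun j _ => hf j) Finset.univ_nonempty

/-- Positivity of `S t = ∑ p j * (q j / p j) ^ t`. -/
lemma aux_S_pos (hm : 1 ≤ m) (hp : ∀ j, 0 < p j) (hq : ∀ j, 0 < q j) (t : ℝ) :
    0 < ∑ j, p j * (q j / p j) ^ t :=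
  aux_sum_pos hm _ fun j =>
    mul_pos (hp j) (Real.rpow_pos_of_pos (div_pos (hq j) (hp j)) t)

/-- Log-convexity (in the exponent) of `t ↦ ∑ p j * (q j / p j) ^ t`. -/
lemma aux_logS_convex (hm : 1 ≤ m) (hp : ∀ j, 0 < p j) (hq : ∀ j, 0 < q j) :
    ConvexOn ℝ Set.univ (fun t : ℝ => Real.log (∑ j, p j * (q j / p j) ^ t)) := by
  have hr : ∀ j, 0 < q j / p j := fun j => div_pos (hq j) (hp j)
  have hS : ∀ t : ℝ, 0 < ∑ j, p j * (q j / p j) ^ t := aux_S_pos hm hp hq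
  refine ⟨convex_univ, ?_⟩
  intro x _ y _ a b ha hb hab
  rcases eq_or_lt_of_le ha with ha0 | ha0
  · have hb1 : b = 1 := by linarith
    simp [← ha0, hb1]
  rcases eq_or_lt_of_le hb with hb0 | hb0
  · have ha1 : a = 1 := by linarith
    simp [← hb0, ha1]
  obtain rfl : b = 1 - a := by linarith
  set Sx := ∑ j, p j * (q j / p j) ^ x with hSx
  set Sy := ∑ j, p j * (q j / p j) ^ y with hSy
  have hSxpos := hS x
  have hSypos := hS y
  have key : (∑ j, p j * (q j / p j) ^ (a * x + (1 - a) * y)) ≤ Sx ^ a * Sy ^ (1 - a) := by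
    have hterm : ∀ j : Fin m, p j * (q j / p j) ^ (a * x + (1 - a) * y) ≤
        (Sx ^ a * Sy ^ (1 - a) * (a / Sx)) * (p j * (q j / p j) ^ x) +
        (Sx ^ a * Sy ^ (1 - a) * ((1 - a) / Sy)) * (p j * (q j / p j) ^ y) := by
      intro j
      have hux : (0:ℝ) < p j * (q j / p j) ^ x :=
        mul_pos (hp j) (Real.rpow_pos_of_pos (hr j) x)
      have huy : (0:ℝ) < p j * (q j / p j) ^ y :=
        mul_pos (hp j) (Real.rpow_pos_of_pos (hr j) y)
      have hform : ∀ t : ℝ, p j * (q j / p j) ^ t =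
          Real.exp (Real.log (p j) + Real.log (q j / p j) * t) := by
        intro t
        rw [Real.rpow_def_of_pos (hr j), Real.exp_add, Real.exp_log (hp j)]
      have hsplit : p j * (q j / p j) ^ (a * x + (1 - a) * y) =
          (p j * (q j / p j) ^ x) ^ a * (p j * (q j / p j) ^ y) ^ (1 - a) := by
        rw [hform, hform, hform, ← Real.exp_mul, ← Real.exp_mul, ← Real.exp_add]
        congr 1
        ring
      have hgm : ((p j * (q j / p j) ^ x) / Sx) ^ a * ((p j * (q j / p j) ^ y) / Sy) ^ (1 - a) ≤
          a * ((p j * (q j / p j) ^ x) / Sx) + (1 - a) * ((p j * (q j / p j) ^ y) / Sy) :=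
        Real.geom_mean_le_arith_mean2_weighted ha hb
          (div_nonneg hux.le hSxpos.le) (div_nonneg huy.le hSypos.le) hab
      rw [Real.div_rpow hux.le hSxpos.le, Real.div_rpow huy.le hSypos.le] at hgm
      have hCpos : (0:ℝ) < Sx ^ a * Sy ^ (1 - a) :=
        mul_pos (Real.rpow_pos_of_pos hSxpos a) (Real.rpow_pos_of_pos hSypos (1 - a))
      have hmul := mul_le_mul_of_nonneg_left hgm hCpos.le
      calc p j * (q j / p j) ^ (a * x + (1 - a) * y)
          = (p j * (q j / p j) ^ x) ^ a * (p j * (q j / p j) ^ y) ^ (1 - a) := hsplit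
        _ = (Sx ^ a * Sy ^ (1 - a)) *
            ((p j * (q j / p j) ^ x) ^ a / Sx ^ a *
              ((p j * (q j / p j) ^ y) ^ (1 - a) / Sy ^ (1 - a))) := by
            rw [mul_comm (Sx ^ a) (Sy ^ (1 - a))]
            field_simp [show Sx ^ a ≠ 0 from (Real.rpow_pos_of_pos hSxpos a).ne',
              show Sy ^ (1 - a) ≠ 0 from (Real.rpow_pos_of_pos hSypos (1 - a)).ne']
        _ ≤ (Sx ^ a * Sy ^ (1 - a)) *
            (a * ((p j * (q j / p j) ^ x) / Sx) +
              (1 - a) * ((p j * (q j / p j) ^ y) / Sy)) := hmul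
        _ = (Sx ^ a * Sy ^ (1 - a) * (a / Sx)) * (p j * (q j / p j) ^ x) +
            (Sx ^ a * Sy ^ (1 - a) * ((1 - a) / Sy)) * (p j * (q j / p j) ^ y) := by ring
    calc (∑ j, p j * (q j / p j) ^ (a * x + (1 - a) * y))
        ≤ ∑ j, ((Sx ^ a * Sy ^ (1 - a) * (a / Sx)) * (p j * (q j / p j) ^ x) +
            (Sx ^ a * Sy ^ (1 - a) * ((1 - a) / Sy)) * (p j * (q j / p j) ^ y)) :=
          Finset.sum_le_sum fun j _ => hterm j
      _ = (Sx ^ a * Sy ^ (1 - a) * (a / Sx)) * Sx +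
          (Sx ^ a * Sy ^ (1 - a) * ((1 - a) / Sy)) * Sy := by
          rw [Finset.sum_add_distrib, ← Finset.mul_sum, ← Finset.mul_sum]
      _ = Sx ^ a * Sy ^ (1 - a) := by
          field_simp [show Sx ≠ 0 from hSxpos.ne', show Sy ≠ 0 from hSypos.ne']
          ring
  have hlog := Real.log_le_log (hS (a * x + (1 - a) * y)) key
  rw [Real.log_mul (Real.rpow_pos_of_pos hSxpos a).ne'
      (Real.rpow_pos_of_pos hSypos (1 - a)).ne',
    Real.log_rpow hSxpos, Real.log_rpow hSypos] at hlog
  simpa using hlog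

lemma aux_alg (A C X Y β : ℝ) (hβ0 : β ≠ 0) (hβ1 : (1:ℝ) - β ≠ 0) :
    β * (((1 / (β * (1 - β))) * (β * A + (1 - β) * C - Y) +
        (1 / ((1 - β) * β)) * ((1 - β) * A + β * C - X)) / 2) =
      ((X + Y - (C + A)) / (β - 1)) / 2 := by
  have hβ1' : β - 1 ≠ 0 := by intro h; apply hβ1; linarith
  field_simp
  ring

/-- Rescaled symmetrized Rényi index as a secant slope of a convex function. -/
lemma aux_key_eq (hm : 1 ≤ m) (hp : ∀ j, 0 < p j) (hq : ∀ j, 0 < q j)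
    (β : ℝ) (hβ0 : β ≠ 0) (hβ1 : β ≠ 1) :
    β * symRenyi m β p q =
      ((Real.log (∑ j, p j * (q j / p j) ^ β) +
          Real.log (∑ j, p j * (q j / p j) ^ (1 - β)) -
          (Real.log (∑ j, p j * (q j / p j)) + Real.log (∑ j, p j))) / (β - 1)) / 2 := by
  have hr : ∀ j, 0 < q j / p j := fun j => div_pos (hq j) (hp j)
  have hS : ∀ t : ℝ, 0 < ∑ j, p j * (q j / p j) ^ t := aux_S_pos hm hp hq
  have hP : (0:ℝ) < ∑ j, p j := aux_sum_pos hm _ hp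
  have hQ : (0:ℝ) < ∑ j, p j * (q j / p j) :=
    aux_sum_pos hm _ fun j => mul_pos (hp j) (hr j)
  have hlogdiv : ∀ γ : ℝ, Real.log (((∑ j, p j) ^ γ * (∑ j, p j * (q j / p j)) ^ (1 - γ)) /
      ∑ j, p j * (q j / p j) ^ (1 - γ)) =
      γ * Real.log (∑ j, p j) + (1 - γ) * Real.log (∑ j, p j * (q j / p j)) -
        Real.log (∑ j, p j * (q j / p j) ^ (1 - γ)) := by
    intro γ
    rw [Real.log_div (mul_pos (Real.rpow_pos_of_pos hP γ)
        (Real.rpow_pos_of_pos hQ (1 - γ))).ne' (hS (1 - γ)).ne',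
      Real.log_mul (Real.rpow_pos_of_pos hP γ).ne' (Real.rpow_pos_of_pos hQ (1 - γ)).ne',
      Real.log_rpow hP, Real.log_rpow hQ]
  have h1β : (1:ℝ) - (1 - β) = β := by ring
  have e1 : renyiDiv m β p q = (1 / (β * (1 - β))) *
      (β * Real.log (∑ j, p j) + (1 - β) * Real.log (∑ j, p j * (q j / p j)) -
        Real.log (∑ j, p j * (q j / p j) ^ (1 - β))) := by
    rw [renyiDiv, hlogdiv β]
  have e2 : renyiDiv m (1 - β) p q = (1 / ((1 - β) * β)) *
      ((1 - β) * Real.log (∑ j, p j) + β * Real.log (∑ j, p j * (q j / p j)) -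
        Real.log (∑ j, p j * (q j / p j) ^ β)) := by
    rw [renyiDiv, hlogdiv (1 - β), h1β]
  rw [symRenyi, e1, e2]
  exact aux_alg _ _ _ _ _ hβ0 (sub_ne_zero.mpr (Ne.symm hβ1))

end Aux

/-- Monotonicity of the rescaled symmetrized Rényi index: if `1/2 ≤ α ≤ α'`
with `α ≠ 1` and `α' ≠ 1`, then `α·SR_α(p,q) ≤ α'·SR_{α'}(p,q)`. -/
theorem symRenyi_rescaled_mono (m : ℕ) (hm : 1 ≤ m) (p q : Fin m → ℝ)
    (hp : ∀ j, 0 < p j) (hq : ∀ j, 0 < q j)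
    (α α' : ℝ) (hα : (1 : ℝ) / 2 ≤ α) (hαα' : α ≤ α')
    (hα1 : α ≠ 1) (hα'1 : α' ≠ 1) :
    α * symRenyi m α p q ≤ α' * symRenyi m α' p q := by
  have hα0 : α ≠ 0 := by intro h; rw [h] at hα; linarith
  have hα'0 : α' ≠ 0 := by intro h; rw [h] at hαα'; linarith
  set g : ℝ → ℝ := fun x => Real.log (∑ j, p j * (q j / p j) ^ x) +
      Real.log (∑ j, p j * (q j / p j) ^ (1 - x)) with hg
  have hF := aux_logS_convex hm hp hq
  have hgconv : ConvexOn ℝ Set.univ g := by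
    refine hF.add ?_
    refine ⟨convex_univ, ?_⟩
    intro x _ y _ a b ha hb hab
    have heq : (1:ℝ) - (a • x + b • y) = a • (1 - x) + b • (1 - y) := by
      simp only [smul_eq_mul]
      linarith [hab]
    simp only []
    rw [heq]
    exact hF.2 (Set.mem_univ (1 - x)) (Set.mem_univ (1 - y)) ha hb hab
  have hslope := hgconv.secant_mono (a := 1) (x := α) (y := α')
    (Set.mem_univ _) (Set.mem_univ _) (Set.mem_univ _) hα1 hα'1 hαα'
  have hg1 : g 1 = Real.log (∑ j, p j * (q j / p j)) + Real.log (∑ j, p j) := by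
    rw [hg]
    norm_num
  rw [aux_key_eq hm hp hq α hα0 hα1, aux_key_eq hm hp hq α' hα'0 hα'1]
  rw [hg1] at hslope
  have hgβ : ∀ β : ℝ, g β = Real.log (∑ j, p j * (q j / p j) ^ β) +
      Real.log (∑ j, p j * (q j / p j) ^ (1 - β)) := fun β => rfl
  rw [hgβ α, hgβ α'] at hslope
  exact div_le_div_of_nonneg_right hslope (by norm_num)
end
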